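/- arXiv:2406.02199 — 6 statements merged into one kernel-verified Lean document; each statement's English description precedes it below -/
import Mathlib

section
/- If a finite graph H is strongly transitive, then H is distance-transitive and its diameter is at most 2. -/
private lemma iso_dist_le {V : Type*} {H : SimpleGraph V} (φ : H ≃g H) (u v : V) :
    H.dist (φ u) (φ v) ≤ H.dist u v := by
  by_cases hr : H.Reachable u v
  · obtain ⟨p, hp⟩ := hr.exists_walk_length_eq_dist
    calc H.dist (φ u) (φ v) ≤ (p.map φ.toHom).length := SimpleGraph.dist_le _
      _ = H.dist u v := by rw [SimpleGraph.Walk.length_map, hp]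
  · rw [SimpleGraph.dist_eq_zero_of_not_reachable hr]
    rw [SimpleGraph.dist_eq_zero_of_not_reachable]
    intro ⟨p⟩
    exact hr ⟨(p.map φ.symm.toHom).copy (φ.symm_apply_apply u) (φ.symm_apply_apply v)⟩

private lemma iso_dist {V : Type*} {H : SimpleGraph V} (φ : H ≃g H) (u v : V) :
    H.dist (φ u) (φ v) = H.dist u v := by
  refine le_antisymm (iso_dist_le φ u v) ?_
  have := iso_dist_le φ.symm (φ u) (φ v)
  simpa using this

/-- If a finite graph `H` is strongly transitive, then it is distance-transitive
and its diameter is at most 2 (every pair of connected vertices has distance at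
most 2). -/
theorem stmt_4 {V : Type*} [Fintype V] (H : SimpleGraph V)
    (hstrong : ∃ (S : Set (Equiv.Perm V)) (d₁ d₂ d₃ : ℕ),
      (∀ e ∈ S, ∀ u v : V, H.Adj (e u) (e v) ↔ H.Adj u v) ∧
      1 ≤ d₁ ∧ 1 ≤ d₂ ∧ 1 ≤ d₃ ∧
      (∀ h h' : V, Nat.card {e : Equiv.Perm V // e ∈ S ∧ e h = h'} = d₁) ∧
      (∀ h₁ h₂ h₁' h₂' : V, H.Adj h₁ h₂ → H.Adj h₁' h₂' →
        Nat.card {e : Equiv.Perm V // e ∈ S ∧ e h₁ = h₁' ∧ e h₂ = h₂'} = d₂) ∧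
      (∀ h₁ h₂ h₁' h₂' : V, Hᶜ.Adj h₁ h₂ → Hᶜ.Adj h₁' h₂' →
        Nat.card {e : Equiv.Perm V // e ∈ S ∧ e h₁ = h₁' ∧ e h₂ = h₂'} = d₃)) :
    (∀ h₁ h₂ h₁' h₂' : V, H.Reachable h₁ h₂ → H.Reachable h₁' h₂' →
      H.dist h₁ h₂ = H.dist h₁' h₂' →
      ∃ φ : H ≃g H, φ h₁ = h₁' ∧ φ h₂ = h₂') ∧
    (∀ u v : V, H.Reachable u v → H.dist u v ≤ 2) := by
  obtain ⟨S, d₁, d₂, d₃, hS, hd₁, hd₂, hd₃, hc₁, hc₂, hc₃⟩ := hstrong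
  -- build a graph iso from a permutation in S
  have mkIso : ∀ e : Equiv.Perm V, e ∈ S → { φ : H ≃g H // ∀ x, φ x = e x } :=
    fun e he => ⟨{ toEquiv := e, map_rel_iff' := fun {a b} => hS e he a b }, fun _ => rfl⟩
  have ne_of_card : ∀ (α : Type _) (d : ℕ), 1 ≤ d → Nat.card α = d → Nonempty α := by
    intro α d hd hcard
    by_contra hne
    rw [not_nonempty_iff] at hne
    simp [Nat.card_of_isEmpty] at hcard
    omega
  -- diameter ≤ 2
  have diam : ∀ u v : V, H.Reachable u v → H.dist u v ≤ 2 := by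
    intro u v hr
    by_contra hgt
    push_neg at hgt
    obtain ⟨p, hp⟩ := hr.exists_walk_length_eq_dist
    match p, hp with
    | SimpleGraph.Walk.nil, hp => simp [← hp] at hgt
    | SimpleGraph.Walk.cons h SimpleGraph.Walk.nil, hp => simp [← hp] at hgt
    | SimpleGraph.Walk.cons (v := a) h₁ (SimpleGraph.Walk.cons (v := w) h₂ q), hp =>
      simp only [SimpleGraph.Walk.length_cons] at hp
      have hqlen : q.length + 2 = H.dist u v := by omega
      have huw_ne : u ≠ w := by
        rintro rfl
        have := H.dist_le q
        omega
      have huw_nadj : ¬ H.Adj u w := by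
        intro hadj
        have := H.dist_le (SimpleGraph.Walk.cons hadj q)
        simp only [SimpleGraph.Walk.length_cons] at this
        omega
      have huv_ne : u ≠ v := by
        rintro rfl
        rw [(SimpleGraph.Reachable.dist_eq_zero_iff hr).mpr rfl] at hgt
        omega
      have huv_nadj : ¬ H.Adj u v := by
        intro hadj
        rw [SimpleGraph.dist_eq_one_iff_adj.mpr hadj] at hgt
        omega
      have hcomp1 : Hᶜ.Adj u w := ⟨huw_ne, huw_nadj⟩
      have hcomp2 : Hᶜ.Adj u v := ⟨huv_ne, huv_nadj⟩
      have hcard := hc₃ u w u v hcomp1 hcomp2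
      have hnonempty : Nonempty {e : Equiv.Perm V // e ∈ S ∧ e u = u ∧ e w = v} :=
        ne_of_card _ _ hd₃ hcard
      obtain ⟨e, he, heu, hew⟩ := hnonempty
      obtain ⟨φ, hφ⟩ := mkIso e he
      have hdeq : H.dist u v = H.dist u w := by
        have := iso_dist φ u w
        rw [hφ, hφ, heu, hew] at this
        exact this
      have hle : H.dist u w ≤ 2 := by
        have := H.dist_le (SimpleGraph.Walk.cons h₁ (SimpleGraph.Walk.cons h₂ SimpleGraph.Walk.nil))
        simpa using this
      omega
  refine ⟨?_, diam⟩
  intro h₁ h₂ h₁' h₂' hr hr' heq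
  by_cases h12 : h₁ = h₂
  · subst h12
    have h0 : H.dist h₁ h₁ = 0 := (SimpleGraph.Reachable.dist_eq_zero_iff hr).mpr rfl
    have h0' : h₁' = h₂' := (SimpleGraph.Reachable.dist_eq_zero_iff hr').mp (by omega)
    have hnonempty : Nonempty {e : Equiv.Perm V // e ∈ S ∧ e h₁ = h₁'} :=
      ne_of_card _ _ hd₁ (hc₁ h₁ h₁')
    obtain ⟨e, he, heq1⟩ := hnonempty
    obtain ⟨φ, hφ⟩ := mkIso e he
    exact ⟨φ, by rw [hφ, heq1], by rw [hφ, heq1, h0']⟩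
  · by_cases hadj : H.Adj h₁ h₂
    · have h1 : H.dist h₁ h₂ = 1 := SimpleGraph.dist_eq_one_iff_adj.mpr hadj
      have hadj' : H.Adj h₁' h₂' := SimpleGraph.dist_eq_one_iff_adj.mp (by omega)
      have hnonempty : Nonempty {e : Equiv.Perm V // e ∈ S ∧ e h₁ = h₁' ∧ e h₂ = h₂'} :=
        ne_of_card _ _ hd₂ (hc₂ h₁ h₂ h₁' h₂' hadj hadj')
      obtain ⟨e, he, heq1, heq2⟩ := hnonempty
      obtain ⟨φ, hφ⟩ := mkIso e he
      exact ⟨φ, by rw [hφ, heq1], by rw [hφ, heq2]⟩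
    · have hd0 : H.dist h₁ h₂ ≠ 0 := fun h => h12 ((SimpleGraph.Reachable.dist_eq_zero_iff hr).mp h)
      have hd1 : H.dist h₁ h₂ ≠ 1 := fun h => hadj (SimpleGraph.dist_eq_one_iff_adj.mp h)
      have hne' : h₁' ≠ h₂' := fun h => hd0 (heq ▸ (SimpleGraph.Reachable.dist_eq_zero_iff hr').mpr h)
      have hnadj' : ¬ H.Adj h₁' h₂' := fun h => hd1 (heq ▸ SimpleGraph.dist_eq_one_iff_adj.mpr h)
      have hnonempty : Nonempty {e : Equiv.Perm V // e ∈ S ∧ e h₁ = h₁' ∧ e h₂ = h₂'} :=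
        ne_of_card _ _ hd₃ (hc₃ h₁ h₂ h₁' h₂' ⟨h12, hadj⟩ ⟨hne', hnadj'⟩)
      obtain ⟨e, he, heq1, heq2⟩ := hnonempty
      obtain ⟨φ, hφ⟩ := mkIso e he
      exact ⟨φ, by rw [hφ, heq1], by rw [hφ, heq2]⟩
end

section
/- Let G, H be finite graphs with a common equitable partition given by cells C_1,...,C_k of G and D_1,...,D_k of H, with |C_i| = |D_i| = n_i and parameters c_ij. Define the strategy P(h_A, h_B | g_A, g_B) to be 1/n_i if g_A = g_B, h_A = h_B, g_A ∈ C_i, h_A ∈ D_i; 1/(n_i c_ij) if g_A ~ g_B, h_A ~ h_B, g_A ∈ C_i, g_B ∈ C_j, h_A ∈ D_i, h_B ∈ D_j; 1/(n_i c̄_ij) if g_A and g_B are distinct and non-adjacent, h_A and h_B are distinct and non-adjacent, with the same cell conditions (where c̄_ij = n_j − c_ij − δ_ij); and 0 otherwise. Then for every pair of inputs (g_A, g_B), the function (h_A, h_B) ↦ P(h_A, h_B | g_A, g_B) is a probability distribution, i.e., nonnegative and summing to 1 over all (h_A, h_B) ∈ V(H)². -/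
open Finset
open scoped Classical

lemma sum_ite_card {α : Type*} [Fintype α] (p : α → Prop) [DecidablePred p] (a : ℝ) :
    ∑ x : α, (if p x then a else 0) = ((univ.filter p).card : ℝ) * a := by
  rw [← Finset.sum_filter, Finset.sum_const, nsmul_eq_mul]

lemma count_aux {V : Type*} [Fintype V] {k : ℕ} (G : SimpleGraph V) (ι : V → Fin k)
    (n : Fin k → ℕ) (c : Fin k → Fin k → ℕ)
    (hCn : ∀ i, (Finset.univ.filter (fun v : V => ι v = i)).card = n i)
    (hCe : ∀ (j : Fin k) (v : V),
      (Finset.univ.filter (fun u : V => ι u = j ∧ G.Adj v u)).card = c (ι v) j)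
    (j : Fin k) (v : V) :
    (Finset.univ.filter (fun u : V => ι u = j ∧ u ≠ v ∧ ¬G.Adj v u)).card
      = n j - c (ι v) j - (if ι v = j then 1 else 0) := by
  classical
  set S : Finset V := univ.filter (fun u => ι u = j) with hS
  have hScard : S.card = n j := hCn j
  have h1 : (S.filter (fun u => G.Adj v u)).card = c (ι v) j := by
    rw [hS, Finset.filter_filter]; exact hCe j v
  have h2 : (S.filter (fun u => ¬G.Adj v u)).card = n j - c (ι v) j := by
    have := Finset.card_filter_add_card_filter_not (s := S)
      (p := fun u => G.Adj v u)
    omega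
  set T : Finset V := S.filter (fun u => ¬G.Adj v u) with hT
  have h3 : (T.filter (fun u => u = v)).card = (if ι v = j then 1 else 0) := by
    by_cases hij : ι v = j
    · have : T.filter (fun u => u = v) = {v} := by
        ext u
        simp only [hT, hS, Finset.mem_filter, Finset.mem_univ, true_and,
          Finset.mem_singleton]
        constructor
        · tauto
        · rintro rfl; exact ⟨⟨hij, G.irrefl⟩, rfl⟩
      rw [this, if_pos hij]; simp
    · have : T.filter (fun u => u = v) = ∅ := by
        ext u
        simp only [hT, hS, Finset.mem_filter, Finset.mem_univ, true_and,
          Finset.notMem_empty, iff_false]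
        rintro ⟨⟨h, _⟩, rfl⟩; exact hij h
      rw [this, if_neg hij]; simp
  have h4 : (T.filter (fun u => u ≠ v)).card
      = n j - c (ι v) j - (if ι v = j then 1 else 0) := by
    have h5 := Finset.card_filter_add_card_filter_not (s := T)
      (p := fun u => u ≠ v)
    have h6 : T.filter (fun u => ¬ u ≠ v) = T.filter (fun u => u = v) := by
      apply Finset.filter_congr; intro u _; simp
    rw [h6] at h5
    have hTcard : T.card = n j - c (ι v) j := h2
    omega
  rw [← h4, hT, hS, Finset.filter_filter, Finset.filter_filter]
  congr 1
  ext u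
  simp only [Finset.mem_filter]
  tauto

/-- The canonical non-signalling strategy for the `(G, H)` isomorphism game
built from a common equitable partition, following Atserias et al.  Here
`ι : V → Fin k` and `κ : W → Fin k` assign to each vertex the index of its
cell, `n i` is the common cell size, `c i j` the partition parameters, and
`c̄ i j = n j - c i j - δ_ij`.  The value `canonicalStrategy G H ι κ n c gA gB hA hB`
is the probability that the players answer `(hA, hB)` on inputs `(gA, gB)`. -/
noncomputable def canonicalStrategy {V W : Type*} (G : SimpleGraph V) (H : SimpleGraph W)
    {k : ℕ} (ι : V → Fin k) (κ : W → Fin k) (n : Fin k → ℕ) (c : Fin k → Fin k → ℕ)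
    (gA gB : V) (hA hB : W) : ℝ :=
  if gA = gB ∧ hA = hB ∧ κ hA = ι gA then ((n (ι gA) : ℝ))⁻¹
  else if G.Adj gA gB ∧ H.Adj hA hB ∧ κ hA = ι gA ∧ κ hB = ι gB then
    ((n (ι gA) : ℝ) * (c (ι gA) (ι gB) : ℝ))⁻¹
  else if gA ≠ gB ∧ ¬ G.Adj gA gB ∧ hA ≠ hB ∧ ¬ H.Adj hA hB ∧ κ hA = ι gA ∧ κ hB = ι gB then
    ((n (ι gA) : ℝ) *
      ((n (ι gB) - c (ι gA) (ι gB) - (if ι gA = ι gB then 1 else 0) : ℕ) : ℝ))⁻¹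
  else 0


/-- The canonical strategy from a common equitable partition is, for every pair
of inputs, a probability distribution on output pairs: nonnegative and summing
to 1. -/
theorem stmt_13 {V W : Type*} [Fintype V] [Fintype W]
    (G : SimpleGraph V) (H : SimpleGraph W) {k : ℕ}
    (ι : V → Fin k) (κ : W → Fin k) (n : Fin k → ℕ) (c : Fin k → Fin k → ℕ)
    (hCn : ∀ i, (Finset.univ.filter (fun v : V => ι v = i)).card = n i)
    (hDn : ∀ i, (Finset.univ.filter (fun w : W => κ w = i)).card = n i)
    (hCe : ∀ (j : Fin k) (v : V),
      (Finset.univ.filter (fun u : V => ι u = j ∧ G.Adj v u)).card = c (ι v) j)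
    (hDe : ∀ (j : Fin k) (w : W),
      (Finset.univ.filter (fun u : W => κ u = j ∧ H.Adj w u)).card = c (κ w) j) :
    ∀ gA gB : V,
      (∀ hA hB : W, 0 ≤ canonicalStrategy G H ι κ n c gA gB hA hB) ∧
      (∑ hA : W, ∑ hB : W, canonicalStrategy G H ι κ n c gA gB hA hB = 1) := by
  intro gA gB
  have hnpos : 0 < n (ι gA) := by
    rw [← hCn (ι gA)]
    exact Finset.card_pos.mpr ⟨gA, by simp⟩
  have hnne : ((n (ι gA) : ℝ)) ≠ 0 := by exact_mod_cast hnpos.ne'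
  refine ⟨?_, ?_⟩
  · intro hA hB
    unfold canonicalStrategy
    split_ifs <;> positivity
  · by_cases hAB : gA = gB
    · -- diagonal case
      subst hAB
      have hpt : ∀ hA hB : W, canonicalStrategy G H ι κ n c gA gA hA hB
          = if hA = hB ∧ κ hA = ι gA then ((n (ι gA) : ℝ))⁻¹ else 0 := by
        intro hA hB
        unfold canonicalStrategy
        rw [if_neg (fun h => G.irrefl h.1 :
          ¬(G.Adj gA gA ∧ H.Adj hA hB ∧ κ hA = ι gA ∧ κ hB = ι gA))]
        rw [if_neg (fun h => h.1 rfl :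
          ¬(gA ≠ gA ∧ ¬G.Adj gA gA ∧ hA ≠ hB ∧ ¬H.Adj hA hB ∧ κ hA = ι gA ∧ κ hB = ι gA))]
        exact if_congr (by tauto) rfl rfl
      calc ∑ hA : W, ∑ hB : W, canonicalStrategy G H ι κ n c gA gA hA hB
          = ∑ hA : W, (if κ hA = ι gA then ((n (ι gA) : ℝ))⁻¹ else 0) := by
            apply Finset.sum_congr rfl; intro hA _
            rw [Finset.sum_congr rfl (fun hB _ => hpt hA hB)]
            simp only [ite_and]
            rw [Finset.sum_ite_eq Finset.univ hA
              (fun _ => if κ hA = ι gA then ((n (ι gA) : ℝ))⁻¹ else 0)]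
            simp
        _ = 1 := by
            rw [sum_ite_card, hDn (ι gA), mul_inv_cancel₀ hnne]
    · by_cases hadj : G.Adj gA gB
      · -- adjacent case
        have hcpos : 0 < c (ι gA) (ι gB) := by
          rw [← hCe (ι gB) gA]
          exact Finset.card_pos.mpr ⟨gB, by simp [hadj]⟩
        have hcne : ((c (ι gA) (ι gB) : ℝ)) ≠ 0 := by exact_mod_cast hcpos.ne'
        have hpt : ∀ hA hB : W, canonicalStrategy G H ι κ n c gA gB hA hB
            = if H.Adj hA hB ∧ κ hA = ι gA ∧ κ hB = ι gB then
                ((n (ι gA) : ℝ) * (c (ι gA) (ι gB) : ℝ))⁻¹ else 0 := by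
          intro hA hB
          unfold canonicalStrategy
          rw [if_neg (fun h => hAB h.1 :
            ¬(gA = gB ∧ hA = hB ∧ κ hA = ι gA))]
          rw [if_neg (fun h => h.2.1 hadj :
            ¬(gA ≠ gB ∧ ¬G.Adj gA gB ∧ hA ≠ hB ∧ ¬H.Adj hA hB ∧ κ hA = ι gA ∧ κ hB = ι gB))]
          exact if_congr ⟨fun h => h.2, fun h => ⟨hadj, h⟩⟩ rfl rfl
        have inner : ∀ hA : W,
            ∑ hB : W, canonicalStrategy G H ι κ n c gA gB hA hB
            = if κ hA = ι gA then
                (c (ι gA) (ι gB) : ℝ) * ((n (ι gA) : ℝ) * (c (ι gA) (ι gB) : ℝ))⁻¹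
              else 0 := by
          intro hA
          rw [Finset.sum_congr rfl (fun hB _ => hpt hA hB)]
          by_cases hi : κ hA = ι gA
          · rw [if_pos hi]
            have e : ∑ hB : W,
                (if H.Adj hA hB ∧ κ hA = ι gA ∧ κ hB = ι gB then
                  ((n (ι gA) : ℝ) * (c (ι gA) (ι gB) : ℝ))⁻¹ else 0)
                = ∑ hB : W, (if κ hB = ι gB ∧ H.Adj hA hB then
                  ((n (ι gA) : ℝ) * (c (ι gA) (ι gB) : ℝ))⁻¹ else 0) :=
              Finset.sum_congr rfl (fun hB _ =>
                if_congr ⟨fun h => ⟨h.2.2, h.1⟩, fun h => ⟨h.2, hi, h.1⟩⟩ rfl rfl)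
            rw [e, sum_ite_card]
            have hd := hDe (ι gB) hA
            rw [hi] at hd
            rw [hd]
          · rw [if_neg hi]
            apply Finset.sum_eq_zero; intro hB _
            rw [if_neg]; tauto
        rw [Finset.sum_congr rfl (fun hA _ => inner hA), sum_ite_card, hDn (ι gA)]
        field_simp
      · -- distinct non-adjacent case
        have hGcount := count_aux G ι n c hCn hCe (ι gB) gA
        have hMpos : 0 < n (ι gB) - c (ι gA) (ι gB) - (if ι gA = ι gB then 1 else 0) := by
          rw [← hGcount]
          refine Finset.card_pos.mpr ⟨gB, ?_⟩
          rw [Finset.mem_filter]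
          exact ⟨Finset.mem_univ gB, rfl, fun h => hAB h.symm, hadj⟩
        have hMne : (((n (ι gB) - c (ι gA) (ι gB) - (if ι gA = ι gB then 1 else 0) : ℕ)) : ℝ) ≠ 0 := by
          exact_mod_cast hMpos.ne'
        have hpt : ∀ hA hB : W, canonicalStrategy G H ι κ n c gA gB hA hB
            = if hA ≠ hB ∧ ¬ H.Adj hA hB ∧ κ hA = ι gA ∧ κ hB = ι gB then
                ((n (ι gA) : ℝ) *
                  ((n (ι gB) - c (ι gA) (ι gB) - (if ι gA = ι gB then 1 else 0) : ℕ) : ℝ))⁻¹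
              else 0 := by
          intro hA hB
          unfold canonicalStrategy
          rw [if_neg (fun h => hAB h.1 :
            ¬(gA = gB ∧ hA = hB ∧ κ hA = ι gA))]
          rw [if_neg (fun h => hadj h.1 :
            ¬(G.Adj gA gB ∧ H.Adj hA hB ∧ κ hA = ι gA ∧ κ hB = ι gB))]
          exact if_congr ⟨fun h => h.2.2, fun h => ⟨hAB, hadj, h⟩⟩ rfl rfl
        have inner : ∀ hA : W,
            ∑ hB : W, canonicalStrategy G H ι κ n c gA gB hA hB
            = if κ hA = ι gA then
                ((n (ι gB) - c (ι gA) (ι gB) - (if ι gA = ι gB then 1 else 0) : ℕ) : ℝ) *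
                  ((n (ι gA) : ℝ) *
                    ((n (ι gB) - c (ι gA) (ι gB) - (if ι gA = ι gB then 1 else 0) : ℕ) : ℝ))⁻¹
              else 0 := by
          intro hA
          rw [Finset.sum_congr rfl (fun hB _ => hpt hA hB)]
          by_cases hi : κ hA = ι gA
          · rw [if_pos hi]
            have e : ∑ hB : W,
                (if hA ≠ hB ∧ ¬ H.Adj hA hB ∧ κ hA = ι gA ∧ κ hB = ι gB then
                  ((n (ι gA) : ℝ) *
                    ((n (ι gB) - c (ι gA) (ι gB) - (if ι gA = ι gB then 1 else 0) : ℕ) : ℝ))⁻¹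
                 else 0)
                = ∑ hB : W, (if κ hB = ι gB ∧ hB ≠ hA ∧ ¬ H.Adj hA hB then
                  ((n (ι gA) : ℝ) *
                    ((n (ι gB) - c (ι gA) (ι gB) - (if ι gA = ι gB then 1 else 0) : ℕ) : ℝ))⁻¹
                 else 0) :=
              Finset.sum_congr rfl (fun hB _ =>
                if_congr ⟨fun h => ⟨h.2.2.2, Ne.symm h.1, h.2.1⟩,
                  fun h => ⟨Ne.symm h.2.1, h.2.2, hi, h.1⟩⟩ rfl rfl)
            rw [e, sum_ite_card]
            have hd := count_aux H κ n c hDn hDe (ι gB) hA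
            rw [hi] at hd
            rw [hd]
          · rw [if_neg hi]
            apply Finset.sum_eq_zero; intro hB _
            rw [if_neg]; tauto
        rw [Finset.sum_congr rfl (fun hA _ => inner hA), sum_ite_card, hDn (ι gA)]
        field_simp
end

section
/- With the strategy P from the common equitable partition (as in the Atserias et al. construction), P is non-signalling: the marginal distribution of Alice's output h_A given inputs (g_A, g_B) depends only on g_A, and symmetrically for Bob. Concretely, for g_A ∈ C_i, the marginal probability of any h_A ∈ D_i is 1/n_i regardless of g_B, and 0 if h_A ∉ D_i. -/
open Finset
open scoped Classical

section Aux
variable {α : Type*} [Fintype α] {k : ℕ} (X : SimpleGraph α) (f : α → Fin k)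
  (n : Fin k → ℕ) (c : Fin k → Fin k → ℕ)

lemma cell_split
    (hn : ∀ i, (Finset.univ.filter (fun v : α => f v = i)).card = n i)
    (he : ∀ (j : Fin k) (v : α),
      (Finset.univ.filter (fun u : α => f u = j ∧ X.Adj v u)).card = c (f v) j)
    (j : Fin k) (w : α) :
    (Finset.univ.filter (fun u : α => f u = j ∧ u ≠ w ∧ ¬ X.Adj w u)).card
      + c (f w) j + (if f w = j then 1 else 0) = n j := by
  classical
  rw [← hn j, ← he j w]
  have h1 : ∑ u : α, (if u = w then (if f u = j then (1:ℕ) else 0) else 0)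
      = (if f w = j then (1:ℕ) else 0) :=
    Fintype.sum_ite_eq' w (fun u => if f u = j then (1:ℕ) else 0)
  rw [← h1, Finset.card_filter, Finset.card_filter, Finset.card_filter,
    ← Finset.sum_add_distrib, ← Finset.sum_add_distrib]
  refine Finset.sum_congr rfl fun u _ => ?_
  have hirr : ¬ X.Adj w w := X.irrefl
  by_cases h1 : f u = j <;> by_cases h2 : u = w <;> by_cases h3 : X.Adj w u <;>
    subst_eqs <;> simp_all

lemma double_count
    (hn : ∀ i, (Finset.univ.filter (fun v : α => f v = i)).card = n i)
    (he : ∀ (j : Fin k) (v : α),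
      (Finset.univ.filter (fun u : α => f u = j ∧ X.Adj v u)).card = c (f v) j)
    (i j : Fin k) : n i * c i j = n j * c j i := by
  classical
  have key : ∀ i j : Fin k, n i * c i j
      = ∑ v : α, ∑ u : α, (if f v = i ∧ f u = j ∧ X.Adj v u then (1:ℕ) else 0) := by
    intro i j
    have step : ∀ v : α,
        (∑ u : α, if f v = i ∧ f u = j ∧ X.Adj v u then (1:ℕ) else 0)
          = if f v = i then c i j else 0 := by
      intro v
      by_cases hv : f v = i
      · simp only [hv, true_and, if_pos]
        rw [← hv, ← he j v, Finset.card_filter]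
      · simp [hv]
    rw [Finset.sum_congr rfl fun v _ => step v]
    rw [← Finset.sum_filter, Finset.sum_const, hn, smul_eq_mul]
  rw [key i j, key j i, Finset.sum_comm]
  refine Finset.sum_congr rfl fun v _ => Finset.sum_congr rfl fun u _ => ?_
  congr 1
  simp only [eq_iff_iff]
  constructor
  · rintro ⟨a, b, h⟩; exact ⟨b, a, h.symm⟩
  · rintro ⟨a, b, h⟩; exact ⟨b, a, h.symm⟩

end Aux

/-- The canonical strategy from a common equitable partition is non-signalling:
Alice's output marginal does not depend on Bob's input (it is uniform on the
cell `D_{ι gA}` matching her input's cell), and symmetrically for Bob. -/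
theorem stmt_14 {V W : Type*} [Fintype V] [Fintype W]
    (G : SimpleGraph V) (H : SimpleGraph W) {k : ℕ}
    (ι : V → Fin k) (κ : W → Fin k) (n : Fin k → ℕ) (c : Fin k → Fin k → ℕ)
    (hCn : ∀ i, (Finset.univ.filter (fun v : V => ι v = i)).card = n i)
    (hDn : ∀ i, (Finset.univ.filter (fun w : W => κ w = i)).card = n i)
    (hCe : ∀ (j : Fin k) (v : V),
      (Finset.univ.filter (fun u : V => ι u = j ∧ G.Adj v u)).card = c (ι v) j)
    (hDe : ∀ (j : Fin k) (w : W),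
      (Finset.univ.filter (fun u : W => κ u = j ∧ H.Adj w u)).card = c (κ w) j) :
    (∀ (gA gB : V) (hA : W),
      ∑ hB : W, canonicalStrategy G H ι κ n c gA gB hA hB =
        if κ hA = ι gA then ((n (ι gA) : ℝ))⁻¹ else 0) ∧
    (∀ (gA gB : V) (hB : W),
      ∑ hA : W, canonicalStrategy G H ι κ n c gA gB hA hB =
        if κ hB = ι gB then ((n (ι gB) : ℝ))⁻¹ else 0) := by
  classical
  have nV : ∀ v : V, 0 < n (ι v) := fun v => by
    rw [← hCn (ι v)]; exact Finset.card_pos.2 ⟨v, by simp⟩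
  have cAdj : ∀ v u : V, G.Adj v u → 0 < c (ι v) (ι u) := fun v u h => by
    rw [← hCe (ι u) v]; exact Finset.card_pos.2 ⟨u, by simp [h]⟩
  have splitV := cell_split G ι n c hCn hCe
  have splitW := cell_split H κ n c hDn hDe
  have dcV := double_count G ι n c hCn hCe
  have cbarPos : ∀ v u : V, v ≠ u → ¬ G.Adj v u →
      0 < n (ι u) - c (ι v) (ι u) - (if ι v = ι u then 1 else 0) := by
    intro v u hne hadj
    have h1 : 0 < (Finset.univ.filter
        (fun x : V => ι x = ι u ∧ x ≠ v ∧ ¬ G.Adj v x)).card :=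
      Finset.card_pos.2 ⟨u, by simp [hne.symm, hadj]⟩
    have h2 := splitV (ι u) v
    omega
  have hzeroA : ∀ (gA gB : V) (hA : W), κ hA ≠ ι gA →
      ∀ hB, canonicalStrategy G H ι κ n c gA gB hA hB = 0 := by
    intro gA gB hA hκ hB
    unfold canonicalStrategy
    rw [if_neg (fun h => hκ h.2.2), if_neg (fun h => hκ h.2.2.1),
      if_neg (fun h => hκ h.2.2.2.2.1)]
  have hzeroB : ∀ (gA gB : V) (hB : W), κ hB ≠ ι gB →
      ∀ hA, canonicalStrategy G H ι κ n c gA gB hA hB = 0 := by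
    intro gA gB hB hκ hA
    unfold canonicalStrategy
    rw [if_neg (fun h => hκ (show κ hB = ι gB by rw [← h.2.1, ← h.1]; exact h.2.2)),
      if_neg (fun h => hκ h.2.2.2), if_neg (fun h => hκ h.2.2.2.2.2)]
  constructor
  · -- Alice marginal
    intro gA gB hA
    by_cases hκ : κ hA = ι gA
    swap
    · simp [hzeroA gA gB hA hκ, hκ]
    rw [if_pos hκ]
    rcases eq_or_ne gA gB with heq | hne
    · subst heq
      have hsum : ∀ hB : W, canonicalStrategy G H ι κ n c gA gA hA hB
          = if hA = hB then ((n (ι gA) : ℝ))⁻¹ else 0 := by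
        intro hB
        unfold canonicalStrategy
        have hirr : ¬ G.Adj gA gA := G.irrefl
        split_ifs with h1 h2 h3 <;> simp_all
      simp only [hsum]
      rw [Fintype.sum_ite_eq hA (fun _ => ((n (ι gA) : ℝ))⁻¹)]
    · by_cases hadj : G.Adj gA gB
      · have hsum : ∀ hB : W, canonicalStrategy G H ι κ n c gA gB hA hB
            = if κ hB = ι gB ∧ H.Adj hA hB then
                ((n (ι gA) : ℝ) * (c (ι gA) (ι gB) : ℝ))⁻¹ else 0 := by
          intro hB
          unfold canonicalStrategy
          rw [if_neg (fun h => hne h.1),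
            if_neg (show ¬(gA ≠ gB ∧ ¬ G.Adj gA gB ∧ hA ≠ hB ∧ ¬ H.Adj hA hB ∧
              κ hA = ι gA ∧ κ hB = ι gB) from fun h => h.2.1 hadj)]
          refine if_congr ?_ rfl rfl
          constructor
          · rintro ⟨-, a, -, b⟩; exact ⟨b, a⟩
          · rintro ⟨b, a⟩; exact ⟨hadj, a, hκ, b⟩
        simp only [hsum]
        rw [← Finset.sum_filter, Finset.sum_const, hDe (ι gB) hA, hκ, nsmul_eq_mul]
        have hc : (0:ℝ) < c (ι gA) (ι gB) := by exact_mod_cast cAdj gA gB hadj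
        have hn0 : (0:ℝ) < n (ι gA) := by exact_mod_cast nV gA
        field_simp
        try ring
      · set M : ℕ := n (ι gB) - c (ι gA) (ι gB) - (if ι gA = ι gB then 1 else 0) with hM
        have hsum : ∀ hB : W, canonicalStrategy G H ι κ n c gA gB hA hB
            = if κ hB = ι gB ∧ hB ≠ hA ∧ ¬ H.Adj hA hB then
                ((n (ι gA) : ℝ) * (M : ℝ))⁻¹ else 0 := by
          intro hB
          unfold canonicalStrategy
          rw [if_neg (fun h => hne h.1),
            if_neg (fun h => hadj h.1)]
          rw [← hM]
          refine if_congr ?_ rfl rfl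
          constructor
          · rintro ⟨-, -, h3, h4, -, h6⟩; exact ⟨h6, h3.symm, h4⟩
          · rintro ⟨h6, h3, h4⟩; exact ⟨hne, hadj, h3.symm, h4, hκ, h6⟩
        simp only [hsum]
        rw [← Finset.sum_filter, Finset.sum_const, nsmul_eq_mul]
        have hcard : (Finset.univ.filter
            (fun hB : W => κ hB = ι gB ∧ hB ≠ hA ∧ ¬ H.Adj hA hB)).card = M := by
          have := splitW (ι gB) hA
          rw [hκ] at this
          omega
        rw [hcard]
        have hMpos : 0 < M := cbarPos gA gB hne hadj
        have hMr : (0:ℝ) < M := by exact_mod_cast hMpos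
        have hn0 : (0:ℝ) < n (ι gA) := by exact_mod_cast nV gA
        field_simp
        try ring
  · -- Bob marginal
    intro gA gB hB
    by_cases hκ : κ hB = ι gB
    swap
    · simp [hzeroB gA gB hB hκ, hκ]
    rw [if_pos hκ]
    rcases eq_or_ne gA gB with heq | hne
    · subst heq
      have hsum : ∀ hA : W, canonicalStrategy G H ι κ n c gA gA hA hB
          = if hA = hB then ((n (ι gA) : ℝ))⁻¹ else 0 := by
        intro hA
        unfold canonicalStrategy
        have hirr : ¬ G.Adj gA gA := G.irrefl
        split_ifs with h1 h2 h3 <;> simp_all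
      simp only [hsum]
      rw [Fintype.sum_ite_eq' hB (fun _ => ((n (ι gA) : ℝ))⁻¹)]
    · by_cases hadj : G.Adj gA gB
      · have hsum : ∀ hA : W, canonicalStrategy G H ι κ n c gA gB hA hB
            = if κ hA = ι gA ∧ H.Adj hB hA then
                ((n (ι gA) : ℝ) * (c (ι gA) (ι gB) : ℝ))⁻¹ else 0 := by
          intro hA
          unfold canonicalStrategy
          rw [if_neg (fun h => hne h.1),
            if_neg (show ¬(gA ≠ gB ∧ ¬ G.Adj gA gB ∧ hA ≠ hB ∧ ¬ H.Adj hA hB ∧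
              κ hA = ι gA ∧ κ hB = ι gB) from fun h => h.2.1 hadj)]
          refine if_congr ?_ rfl rfl
          constructor
          · rintro ⟨-, a, b, -⟩; exact ⟨b, a.symm⟩
          · rintro ⟨b, a⟩; exact ⟨hadj, a.symm, b, hκ⟩
        simp only [hsum]
        rw [← Finset.sum_filter, Finset.sum_const, hDe (ι gA) hB, hκ, nsmul_eq_mul]
        have hd := dcV (ι gA) (ι gB)
        have hcab : 0 < c (ι gA) (ι gB) := cAdj gA gB hadj
        have hna : 0 < n (ι gA) := nV gA
        have hnb : 0 < n (ι gB) := nV gB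
        have hcba : 0 < c (ι gB) (ι gA) := by
          rcases Nat.eq_zero_or_pos (c (ι gB) (ι gA)) with h | h
          · rw [h, Nat.mul_zero] at hd
            exact absurd hd (Nat.mul_pos hna hcab).ne'
          · exact h
        have hdR : (n (ι gA) : ℝ) * (c (ι gA) (ι gB) : ℝ)
            = (n (ι gB) : ℝ) * (c (ι gB) (ι gA) : ℝ) := by exact_mod_cast hd
        rw [hdR]
        have h1 : (0:ℝ) < c (ι gB) (ι gA) := by exact_mod_cast hcba
        have h2 : (0:ℝ) < n (ι gB) := by exact_mod_cast hnb
        field_simp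
        try ring
      · set M : ℕ := n (ι gB) - c (ι gA) (ι gB) - (if ι gA = ι gB then 1 else 0) with hM
        set M' : ℕ := n (ι gA) - c (ι gB) (ι gA) - (if ι gB = ι gA then 1 else 0) with hM'
        have hsum : ∀ hA : W, canonicalStrategy G H ι κ n c gA gB hA hB
            = if κ hA = ι gA ∧ hA ≠ hB ∧ ¬ H.Adj hB hA then
                ((n (ι gA) : ℝ) * (M : ℝ))⁻¹ else 0 := by
          intro hA
          unfold canonicalStrategy
          rw [if_neg (fun h => hne h.1),
            if_neg (fun h => hadj h.1)]
          rw [← hM]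
          refine if_congr ?_ rfl rfl
          constructor
          · rintro ⟨-, -, h3, h4, h5, -⟩; exact ⟨h5, h3, fun h => h4 h.symm⟩
          · rintro ⟨h5, h3, h4⟩; exact ⟨hne, hadj, h3, fun h => h4 h.symm, h5, hκ⟩
        simp only [hsum]
        rw [← Finset.sum_filter, Finset.sum_const, nsmul_eq_mul]
        have hcard : (Finset.univ.filter
            (fun hA : W => κ hA = ι gA ∧ hA ≠ hB ∧ ¬ H.Adj hB hA)).card = M' := by
          have := splitW (ι gA) hB
          rw [hκ] at this
          omega
        rw [hcard]
        have hMpos : 0 < M := cbarPos gA gB hne hadj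
        have hM'pos : 0 < M' := cbarPos gB gA hne.symm (fun h => hadj h.symm)
        have hb1 : c (ι gA) (ι gB) ≤ n (ι gB) := by have := splitV (ι gB) gA; omega
        have hb2 : c (ι gB) (ι gA) ≤ n (ι gA) := by have := splitV (ι gA) gB; omega
        have hd := dcV (ι gA) (ι gB)
        have hkey : n (ι gB) * M' = n (ι gA) * M := by
          by_cases hij : ι gA = ι gB
          · rw [hM, hM', hij]
          · have hij' : ι gB ≠ ι gA := Ne.symm hij
            rw [hM, hM', if_neg hij, if_neg hij', Nat.sub_zero, Nat.sub_zero]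
            zify [hb1, hb2]
            have hdz : (n (ι gA) : ℤ) * c (ι gA) (ι gB)
                = (n (ι gB) : ℤ) * c (ι gB) (ι gA) := by exact_mod_cast hd
            linear_combination hdz
        have hkeyR : (n (ι gB) : ℝ) * (M' : ℝ) = (n (ι gA) : ℝ) * (M : ℝ) := by
          exact_mod_cast hkey
        have hMr : (0:ℝ) < M := by exact_mod_cast hMpos
        have hM'r : (0:ℝ) < M' := by exact_mod_cast hM'pos
        have hna : (0:ℝ) < n (ι gA) := by exact_mod_cast nV gA
        have hnb : (0:ℝ) < n (ι gB) := by exact_mod_cast nV gB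
        have hprod : (0:ℝ) < (n (ι gA) : ℝ) * (M : ℝ) := mul_pos hna hMr
        rw [← div_eq_mul_inv, inv_eq_one_div, div_eq_div_iff hprod.ne' hnb.ne']
        linear_combination hkeyR
end

section
/- Let H = H_1 ⊔ H_2 be a disconnected graph (no edges between H_1 and H_2), let G, H have a common equitable partition with cells C_i, D_i, sizes n_i, parameters c_ij, and assume the proportion |D_i ∩ H_1| / |D_i| is independent of i. Let P be the canonical strategy defined from the common equitable partition. Then for any g_A ∈ C_i, g_B ∈ C_j with g_A, g_B distinct and non-adjacent, the probability under P(·,·|g_A,g_B) that h_A ∈ H_1 and h_B ∈ H_2 equals |D_i ∩ H_1| · |D_j ∩ H_2| / (n_i · c̄_ij), and this equals the probability that h_A ∈ H_2 and h_B ∈ H_1. -/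
open Finset
open scoped Classical

/-- Suppose `H = H₁ ⊔ H₂` is disconnected (no edges between `H₁` and its
complement `H₂`), `G, H` have a common equitable partition, and the proportion
`|D i ∩ H₁| / |D i|` is independent of `i` (hypothesis (H)).  Then for distinct
non-adjacent inputs `gA ∈ C i`, `gB ∈ C j`, the probability under the canonical
strategy that `hA ∈ H₁` and `hB ∈ H₂` equals
`|D i ∩ H₁| ⬝ |D j ∩ H₂| / (n i ⬝ c̄ i j)`, and this equals the probability that
`hA ∈ H₂` and `hB ∈ H₁`. -/
theorem stmt_15 {V W : Type*} [Fintype V] [Fintype W]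
    (G : SimpleGraph V) (H : SimpleGraph W) {k : ℕ}
    (ι : V → Fin k) (κ : W → Fin k) (n : Fin k → ℕ) (c : Fin k → Fin k → ℕ)
    (hCn : ∀ i, (Finset.univ.filter (fun v : V => ι v = i)).card = n i)
    (hDn : ∀ i, (Finset.univ.filter (fun w : W => κ w = i)).card = n i)
    (hCe : ∀ (j : Fin k) (v : V),
      (Finset.univ.filter (fun u : V => ι u = j ∧ G.Adj v u)).card = c (ι v) j)
    (hDe : ∀ (j : Fin k) (w : W),
      (Finset.univ.filter (fun u : W => κ u = j ∧ H.Adj w u)).card = c (κ w) j)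
    (H₁ : Finset W)
    (hcomp : ∀ u v : W, H.Adj u v → (u ∈ H₁ ↔ v ∈ H₁))
    (hprop : ∀ i j : Fin k,
      ((Finset.univ.filter (fun w : W => κ w = i ∧ w ∈ H₁)).card : ℝ) / (n i : ℝ) =
      ((Finset.univ.filter (fun w : W => κ w = j ∧ w ∈ H₁)).card : ℝ) / (n j : ℝ)) :
    ∀ gA gB : V, gA ≠ gB → ¬ G.Adj gA gB →
      (∑ hA ∈ H₁, ∑ hB ∈ H₁ᶜ, canonicalStrategy G H ι κ n c gA gB hA hB =
        ((Finset.univ.filter (fun w : W => κ w = ι gA ∧ w ∈ H₁)).card : ℝ) *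
          ((Finset.univ.filter (fun w : W => κ w = ι gB ∧ w ∉ H₁)).card : ℝ) /
          ((n (ι gA) : ℝ) *
            ((n (ι gB) - c (ι gA) (ι gB) - (if ι gA = ι gB then 1 else 0) : ℕ) : ℝ))) ∧
      (∑ hA ∈ H₁, ∑ hB ∈ H₁ᶜ, canonicalStrategy G H ι κ n c gA gB hA hB =
        ∑ hA ∈ H₁ᶜ, ∑ hB ∈ H₁, canonicalStrategy G H ι κ n c gA gB hA hB) := by

  intro gA gB hne hnadj
  have key : ∀ hA hB : W, ¬ (hA ∈ H₁ ↔ hB ∈ H₁) →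
      canonicalStrategy G H ι κ n c gA gB hA hB =
        (if κ hA = ι gA then (1:ℝ) else 0) * ((if κ hB = ι gB then (1:ℝ) else 0) *
          ((n (ι gA) : ℝ) *
            ((n (ι gB) - c (ι gA) (ι gB) - (if ι gA = ι gB then 1 else 0) : ℕ) : ℝ))⁻¹) := by
    intro hA hB h12
    have hmem : hA ≠ hB := by
      intro h; exact h12 (by rw [h])
    have hnadjH : ¬ H.Adj hA hB := fun h => h12 (hcomp _ _ h)
    unfold canonicalStrategy
    rw [if_neg (fun h => hne h.1), if_neg (fun h => hnadj h.1)]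
    by_cases h1k : κ hA = ι gA
    · by_cases h2k : κ hB = ι gB
      · rw [if_pos ⟨hne, hnadj, hmem, hnadjH, h1k, h2k⟩, if_pos h1k, if_pos h2k]; ring
      · rw [if_neg (fun h => h2k h.2.2.2.2.2), if_pos h1k, if_neg h2k]; ring
    · rw [if_neg (fun h => h1k h.2.2.2.2.1), if_neg h1k]; ring
  set i := ι gA
  set j := ι gB
  set r : ℝ := ((n i : ℝ) * ((n j - c i j - (if i = j then 1 else 0) : ℕ) : ℝ))⁻¹ with hr
  have sumform : ∀ s t : Finset W, (∀ a ∈ s, ∀ b ∈ t, ¬ (a ∈ H₁ ↔ b ∈ H₁)) →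
      ∑ hA ∈ s, ∑ hB ∈ t, canonicalStrategy G H ι κ n c gA gB hA hB =
        ((s.filter (fun w => κ w = i)).card : ℝ) *
          (((t.filter (fun w => κ w = j)).card : ℝ) * r) := by
    intro s t hst
    rw [Finset.sum_congr rfl (fun hA hhA =>
      Finset.sum_congr rfl (fun hB hhB => key hA hB (hst hA hhA hB hhB)))]
    rw [← Finset.sum_mul_sum]
    rw [← Finset.sum_mul, Finset.sum_boole, Finset.sum_boole]
  have hAB : ∀ a ∈ H₁, ∀ b ∈ H₁ᶜ, ¬ (a ∈ H₁ ↔ b ∈ H₁) := by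
    intro a ha b hb h; exact (Finset.mem_compl.mp hb) (h.mp ha)
  have hBA : ∀ a ∈ H₁ᶜ, ∀ b ∈ H₁, ¬ (a ∈ H₁ ↔ b ∈ H₁) := by
    intro a ha b hb h; exact (Finset.mem_compl.mp ha) (h.mpr hb)
  -- card identifications
  have cardeq1 : ∀ m : Fin k, (H₁.filter (fun w => κ w = m)).card
      = (Finset.univ.filter (fun w : W => κ w = m ∧ w ∈ H₁)).card := by
    intro m; congr 1; ext w; simp [and_comm]
  have cardeq2 : ∀ m : Fin k, (H₁ᶜ.filter (fun w => κ w = m)).card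
      = (Finset.univ.filter (fun w : W => κ w = m ∧ w ∉ H₁)).card := by
    intro m; congr 1; ext w; simp [and_comm]
  set a1 : ℕ := (Finset.univ.filter (fun w : W => κ w = i ∧ w ∈ H₁)).card with ha1
  set a2 : ℕ := (Finset.univ.filter (fun w : W => κ w = i ∧ w ∉ H₁)).card with ha2
  set b1 : ℕ := (Finset.univ.filter (fun w : W => κ w = j ∧ w ∈ H₁)).card with hb1
  set b2 : ℕ := (Finset.univ.filter (fun w : W => κ w = j ∧ w ∉ H₁)).card with hb2
  have hsplit : ∀ m : Fin k,
      (Finset.univ.filter (fun w : W => κ w = m ∧ w ∈ H₁)).card +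
      (Finset.univ.filter (fun w : W => κ w = m ∧ w ∉ H₁)).card = n m := by
    intro m
    have h := Finset.card_filter_add_card_filter_not
      (s := Finset.univ.filter (fun w : W => κ w = m)) (p := fun w => w ∈ H₁)
    rw [Finset.filter_filter, Finset.filter_filter] at h
    rw [← hDn m, ← h]
  have hsa : a1 + a2 = n i := hsplit i
  have hsb : b1 + b2 = n j := hsplit j
  have hsaR : (a1 : ℝ) + a2 = n i := by exact_mod_cast hsa
  have hsbR : (b1 : ℝ) + b2 = n j := by exact_mod_cast hsb
  have keyprod : (a1 : ℝ) * b2 = (a2 : ℝ) * b1 := by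
    by_cases hni : (n i : ℝ) = 0
    · have h1 : (a1 : ℝ) = 0 := by
        have := Nat.cast_nonneg (α := ℝ) a1
        have := Nat.cast_nonneg (α := ℝ) a2
        linarith [hsaR, hni]
      have h2 : (a2 : ℝ) = 0 := by
        have := Nat.cast_nonneg (α := ℝ) a1
        have := Nat.cast_nonneg (α := ℝ) a2
        linarith [hsaR, hni]
      rw [h1, h2]; ring
    · by_cases hnj : (n j : ℝ) = 0
      · have h1 : (b1 : ℝ) = 0 := by
          have := Nat.cast_nonneg (α := ℝ) b1
          have := Nat.cast_nonneg (α := ℝ) b2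
          linarith [hsbR, hnj]
        have h2 : (b2 : ℝ) = 0 := by
          have := Nat.cast_nonneg (α := ℝ) b1
          have := Nat.cast_nonneg (α := ℝ) b2
          linarith [hsbR, hnj]
        rw [h1, h2]; ring
      · have hp := hprop i j
        rw [div_eq_div_iff hni hnj] at hp
        linear_combination hp + (a1 : ℝ) * hsbR - (b1 : ℝ) * hsaR
  have s1 := sumform H₁ H₁ᶜ hAB
  have s2 := sumform H₁ᶜ H₁ hBA
  rw [cardeq1 i, cardeq2 j] at s1
  rw [cardeq2 i, cardeq1 j] at s2
  constructor
  · rw [s1, div_eq_mul_inv, ← ha1, ← hb2, ← hr]; ring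
  · rw [s1, s2, ← ha1, ← hb2, ← ha2, ← hb1]
    linear_combination r * keyprod
end

section
/- Under the same setup, for adjacent inputs g_A ~ g_B with g_A ∈ C_i, g_B ∈ C_j, the probability under the canonical strategy P that both outputs lie in H_1 equals |D_i ∩ H_1| / n_i. (Key step: since H_1 and H_2 are disconnected, every neighbor in D_j of a vertex h_A ∈ D_i ∩ H_1 lies in H_1, and there are exactly c_ij of them.) -/
open Finset
open scoped Classical

/-- For adjacent inputs `gA ~ gB` with `gA ∈ C i`, `gB ∈ C j`, the probability
under the canonical strategy that both outputs lie in `H₁` equals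
`|D i ∩ H₁| / n i` (since `H₁` is a union of connected components of `H`,
every neighbor in `D j` of a vertex `hA ∈ D i ∩ H₁` lies in `H₁`, and there
are exactly `c i j` of them). -/
theorem stmt_17 {V W : Type*} [Fintype V] [Fintype W]
    (G : SimpleGraph V) (H : SimpleGraph W) {k : ℕ}
    (ι : V → Fin k) (κ : W → Fin k) (n : Fin k → ℕ) (c : Fin k → Fin k → ℕ)
    (hCn : ∀ i, (Finset.univ.filter (fun v : V => ι v = i)).card = n i)
    (hDn : ∀ i, (Finset.univ.filter (fun w : W => κ w = i)).card = n i)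
    (hCe : ∀ (j : Fin k) (v : V),
      (Finset.univ.filter (fun u : V => ι u = j ∧ G.Adj v u)).card = c (ι v) j)
    (hDe : ∀ (j : Fin k) (w : W),
      (Finset.univ.filter (fun u : W => κ u = j ∧ H.Adj w u)).card = c (κ w) j)
    (H₁ : Finset W)
    (hcomp : ∀ u v : W, H.Adj u v → (u ∈ H₁ ↔ v ∈ H₁)) :
    ∀ gA gB : V, G.Adj gA gB →
      ∑ hA ∈ H₁, ∑ hB ∈ H₁, canonicalStrategy G H ι κ n c gA gB hA hB =
        ((Finset.univ.filter (fun w : W => κ w = ι gA ∧ w ∈ H₁)).card : ℝ) /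
          (n (ι gA) : ℝ) := by
  intro gA gB hadj
  have hne : gA ≠ gB := hadj.ne
  have hcpos : 0 < c (ι gA) (ι gB) := by
    rw [← hCe (ι gB) gA]
    refine Finset.card_pos.mpr ⟨gB, ?_⟩
    simp [hadj]
  have hc0 : (c (ι gA) (ι gB) : ℝ) ≠ 0 := by exact_mod_cast hcpos.ne'
  have key : ∀ hA ∈ H₁, ∑ hB ∈ H₁, canonicalStrategy G H ι κ n c gA gB hA hB
      = if κ hA = ι gA then ((n (ι gA) : ℝ))⁻¹ else 0 := by
    intro hA hhA
    by_cases hκ : κ hA = ι gA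
    · have step : ∀ hB ∈ H₁, canonicalStrategy G H ι κ n c gA gB hA hB
          = if κ hB = ι gB ∧ H.Adj hA hB
            then ((n (ι gA) : ℝ) * (c (ι gA) (ι gB) : ℝ))⁻¹ else 0 := by
        intro hB _
        unfold canonicalStrategy
        by_cases h : κ hB = ι gB ∧ H.Adj hA hB
        · simp [hne, hadj, hκ, h.1, h.2]
        · rw [if_neg (by rintro ⟨h1, -⟩; exact hne h1), if_neg, if_neg, if_neg h]
          · rintro ⟨_, _, _, _, _, hb⟩
            exact h ⟨hb, by tauto⟩
          · rintro ⟨_, ha, _, hb⟩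
            exact h ⟨hb, ha⟩
      rw [Finset.sum_congr rfl step, ← Finset.sum_filter]
      have hset : H₁.filter (fun hB => κ hB = ι gB ∧ H.Adj hA hB)
          = Finset.univ.filter (fun u : W => κ u = ι gB ∧ H.Adj hA u) := by
        ext u
        simp only [Finset.mem_filter, Finset.mem_univ, true_and]
        constructor
        · tauto
        · rintro ⟨h1, h2⟩
          exact ⟨(hcomp hA u h2).mp hhA, h1, h2⟩
      rw [Finset.sum_const, hset, hDe (ι gB) hA, hκ, nsmul_eq_mul, if_pos rfl,
        mul_inv, ← mul_assoc, mul_comm ((c (ι gA) (ι gB) : ℝ)), mul_assoc,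
        mul_inv_cancel₀ hc0, mul_one]
    · rw [if_neg hκ]
      refine Finset.sum_eq_zero fun hB _ => ?_
      unfold canonicalStrategy
      rw [if_neg (by rintro ⟨h1, -⟩; exact hne h1), if_neg (by tauto), if_neg (by tauto)]
  rw [Finset.sum_congr rfl key, ← Finset.sum_filter, Finset.sum_const, nsmul_eq_mul]
  have hset2 : H₁.filter (fun hA => κ hA = ι gA)
      = Finset.univ.filter (fun w : W => κ w = ι gA ∧ w ∈ H₁) := by
    ext u; simp only [Finset.mem_filter, Finset.mem_univ, true_and]; tauto
  rw [hset2, div_eq_mul_inv]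
end

section
/- Let P be any perfect non-signalling strategy for the (G, H) isomorphism game restricted to inputs in V(G), and let H be strongly transitive with witnessing set S and parameters (d_1, d_2, d_3), d-regular, with |V(H)| = n vertices. Define the averaged strategy P̃(h_A', h_B' | g_A, g_B) = (1/|S|) Σ_{φ ∈ S} P(φ^{-1}(h_A'), φ^{-1}(h_B') | g_A, g_B). Then P̃ has the explicit form: 1/n if g_A = g_B and h_A' = h_B'; 1/(2|E(H)|) if g_A ~ g_B and h_A' ~ h_B'; 1/(2|E(H^c)|) if g_A, g_B distinct non-adjacent and h_A', h_B' distinct non-adjacent; and 0 otherwise. -/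
open Finset
open scoped Classical

private lemma regroup_sum {W : Type*} [Fintype W] (S : Finset (Equiv.Perm W))
    (a b : W) (f : W → W → ℝ) :
    ∑ e ∈ S, f (e.symm a) (e.symm b)
      = ∑ w1 : W, ∑ w2 : W,
          ((S.filter (fun e => e w1 = a ∧ e w2 = b)).card : ℝ) * f w1 w2 := by
  have key : ∀ e : Equiv.Perm W,
      f (e.symm a) (e.symm b)
        = ∑ w1 : W, ∑ w2 : W, if e w1 = a ∧ e w2 = b then f w1 w2 else 0 := by
    intro e
    simp [Equiv.apply_eq_iff_eq_symm_apply, ite_and]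
  calc ∑ e ∈ S, f (e.symm a) (e.symm b)
      = ∑ e ∈ S, ∑ w1 : W, ∑ w2 : W, if e w1 = a ∧ e w2 = b then f w1 w2 else 0 :=
        Finset.sum_congr rfl (fun e _ => key e)
    _ = ∑ w1 : W, ∑ e ∈ S, ∑ w2 : W, (if e w1 = a ∧ e w2 = b then f w1 w2 else 0) :=
        Finset.sum_comm
    _ = ∑ w1 : W, ∑ w2 : W, ∑ e ∈ S, (if e w1 = a ∧ e w2 = b then f w1 w2 else 0) :=
        Finset.sum_congr rfl fun w1 _ => Finset.sum_comm
    _ = ∑ w1 : W, ∑ w2 : W,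
          ((S.filter (fun e => e w1 = a ∧ e w2 = b)).card : ℝ) * f w1 w2 := by
        refine Finset.sum_congr rfl fun w1 _ => Finset.sum_congr rfl fun w2 _ => ?_
        rw [← Finset.sum_filter, Finset.sum_const, nsmul_eq_mul]

private lemma ordered_pairs_card {W : Type*} [Fintype W] (H : SimpleGraph W) :
    ∑ w1 : W, (Finset.univ.filter (fun w2 => H.Adj w1 w2)).card
      = 2 * H.edgeFinset.card := by
  rw [← SimpleGraph.sum_degrees_eq_twice_card_edges]
  refine Finset.sum_congr rfl fun w _ => ?_
  rw [SimpleGraph.degree, SimpleGraph.neighborFinset_eq_filter]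

/-- Fiberwise count of `S` over ordered images of a fixed pair. -/
private lemma card_S_fiber {W : Type*} [Fintype W] (S : Finset (Equiv.Perm W))
    (u v : W) :
    S.card = ∑ w1 : W, ∑ w2 : W,
      (S.filter (fun e => e u = w1 ∧ e v = w2)).card := by
  have := Finset.card_eq_sum_card_fiberwise
    (f := fun e : Equiv.Perm W => ((e u, e v) : W × W)) (s := S)
    (t := Finset.univ) (fun e _ => Finset.mem_univ _)
  rw [this, Fintype.sum_prod_type]
  refine Finset.sum_congr rfl fun w1 _ => Finset.sum_congr rfl fun w2 _ => ?_
  congr 1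
  apply Finset.filter_congr
  intro e _
  simp [Prod.ext_iff]

set_option maxHeartbeats 1000000 in
/-- Averaging any perfect non-signalling strategy for the `(G, H)` isomorphism
game (restricted to inputs in `V(G)`) over a witnessing set `S` of the strong
transitivity of `H` yields the explicit canonical strategy:
`1/n` on matched equal pairs, `1/(2|E(H)|)` on matched adjacent pairs,
`1/(2|E(Hᶜ)|)` on matched distinct non-adjacent pairs, and `0` otherwise. -/
theorem stmt_19 {V W : Type*} [Fintype V] [Fintype W]
    (G : SimpleGraph V) (H : SimpleGraph W)
    (hVW : Fintype.card V = Fintype.card W)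
    (P : V → V → W → W → ℝ)
    (hPnonneg : ∀ gA gB hA hB, 0 ≤ P gA gB hA hB)
    (hPsum : ∀ gA gB, ∑ hA : W, ∑ hB : W, P gA gB hA hB = 1)
    (hPperfect : ∀ gA gB hA hB,
      ¬ ((gA = gB ↔ hA = hB) ∧ (G.Adj gA gB ↔ H.Adj hA hB) ∧
          ((gA ≠ gB ∧ ¬ G.Adj gA gB) ↔ (hA ≠ hB ∧ ¬ H.Adj hA hB))) →
      P gA gB hA hB = 0)
    (S : Finset (Equiv.Perm W))
    (hS : ∀ e ∈ S, ∀ u v : W, H.Adj (e u) (e v) ↔ H.Adj u v)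
    (d₁ d₂ d₃ : ℕ) (hd₁ : 1 ≤ d₁) (hd₂ : 1 ≤ d₂) (hd₃ : 1 ≤ d₃)
    (h1 : ∀ h h' : W, (S.filter (fun e => e h = h')).card = d₁)
    (h2 : ∀ h₁ h₂ h₁' h₂' : W, H.Adj h₁ h₂ → H.Adj h₁' h₂' →
      (S.filter (fun e => e h₁ = h₁' ∧ e h₂ = h₂')).card = d₂)
    (h3 : ∀ h₁ h₂ h₁' h₂' : W, Hᶜ.Adj h₁ h₂ → Hᶜ.Adj h₁' h₂' →
      (S.filter (fun e => e h₁ = h₁' ∧ e h₂ = h₂')).card = d₃)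
    (d : ℕ) (hreg : ∀ w : W, (Finset.univ.filter (fun u => H.Adj w u)).card = d)
    (hedge : ∃ u v : W, H.Adj u v) (hnonedge : ∃ u v : W, u ≠ v ∧ ¬ H.Adj u v) :
    ∀ (gA gB : V) (hA' hB' : W),
      (S.card : ℝ)⁻¹ * ∑ e ∈ S, P gA gB (e.symm hA') (e.symm hB') =
        if gA = gB ∧ hA' = hB' then ((Fintype.card W : ℝ))⁻¹
        else if G.Adj gA gB ∧ H.Adj hA' hB' then
          ((2 * H.edgeFinset.card : ℕ) : ℝ)⁻¹
        else if gA ≠ gB ∧ ¬ G.Adj gA gB ∧ hA' ≠ hB' ∧ ¬ H.Adj hA' hB' then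
          ((2 * Hᶜ.edgeFinset.card : ℕ) : ℝ)⁻¹
        else 0 := by
  obtain ⟨u₀, v₀, huv⟩ := hedge
  obtain ⟨u₁, v₁, huv₁ne, huv₁na⟩ := hnonedge
  have huv₁c : Hᶜ.Adj u₁ v₁ := by rw [SimpleGraph.compl_adj]; exact ⟨huv₁ne, huv₁na⟩
  -- cardinality facts
  have hcardW : (0 : ℝ) < (Fintype.card W : ℝ) := by
    have : 0 < Fintype.card W := Fintype.card_pos_iff.mpr ⟨u₀⟩
    exact_mod_cast this
  have hd₁' : (0 : ℝ) < (d₁ : ℝ) := by exact_mod_cast hd₁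
  have hd₂' : (0 : ℝ) < (d₂ : ℝ) := by exact_mod_cast hd₂
  have hd₃' : (0 : ℝ) < (d₃ : ℝ) := by exact_mod_cast hd₃
  -- |S| = n * d₁
  have cardS1 : S.card = Fintype.card W * d₁ := by
    have := Finset.card_eq_sum_card_fiberwise
      (f := fun e : Equiv.Perm W => e u₀) (s := S) (t := Finset.univ)
      (fun e _ => Finset.mem_univ _)
    rw [this]
    simp [h1]
  -- |S| = 2|E(H)| * d₂
  have cardS2 : S.card = 2 * H.edgeFinset.card * d₂ := by
    rw [card_S_fiber S u₀ v₀]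
    have step : ∀ w1 w2 : W, (S.filter (fun e => e u₀ = w1 ∧ e v₀ = w2)).card
        = if H.Adj w1 w2 then d₂ else 0 := by
      intro w1 w2
      by_cases hadj : H.Adj w1 w2
      · rw [if_pos hadj]; exact h2 u₀ v₀ w1 w2 huv hadj
      · rw [if_neg hadj, Finset.card_eq_zero, Finset.filter_eq_empty_iff]
        rintro e he ⟨he1, he2⟩
        exact hadj (he1 ▸ he2 ▸ (hS e he u₀ v₀).mpr huv)
    calc ∑ w1 : W, ∑ w2 : W, (S.filter (fun e => e u₀ = w1 ∧ e v₀ = w2)).card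
        = ∑ w1 : W, ∑ w2 : W, if H.Adj w1 w2 then d₂ else 0 := by
          refine Finset.sum_congr rfl fun w1 _ => Finset.sum_congr rfl fun w2 _ => ?_
          exact step w1 w2
      _ = ∑ w1 : W, (Finset.univ.filter (fun w2 => H.Adj w1 w2)).card * d₂ := by
          refine Finset.sum_congr rfl fun w1 _ => ?_
          rw [← Finset.sum_filter, Finset.sum_const, smul_eq_mul]
      _ = 2 * H.edgeFinset.card * d₂ := by
          rw [← Finset.sum_mul, ordered_pairs_card H]
  -- permutations in S preserve Hᶜ adjacency
  have hSc : ∀ e ∈ S, ∀ u v : W, Hᶜ.Adj (e u) (e v) ↔ Hᶜ.Adj u v := by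
    intro e he u v
    simp only [SimpleGraph.compl_adj, hS e he, ne_eq, EmbeddingLike.apply_eq_iff_eq]
  -- |S| = 2|E(Hᶜ)| * d₃
  have cardS3 : S.card = 2 * Hᶜ.edgeFinset.card * d₃ := by
    rw [card_S_fiber S u₁ v₁]
    have step : ∀ w1 w2 : W, (S.filter (fun e => e u₁ = w1 ∧ e v₁ = w2)).card
        = if Hᶜ.Adj w1 w2 then d₃ else 0 := by
      intro w1 w2
      by_cases hadj : Hᶜ.Adj w1 w2
      · rw [if_pos hadj]; exact h3 u₁ v₁ w1 w2 huv₁c hadj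
      · rw [if_neg hadj, Finset.card_eq_zero, Finset.filter_eq_empty_iff]
        rintro e he ⟨he1, he2⟩
        exact hadj (he1 ▸ he2 ▸ (hSc e he u₁ v₁).mpr huv₁c)
    calc ∑ w1 : W, ∑ w2 : W, (S.filter (fun e => e u₁ = w1 ∧ e v₁ = w2)).card
        = ∑ w1 : W, ∑ w2 : W, if Hᶜ.Adj w1 w2 then d₃ else 0 := by
          refine Finset.sum_congr rfl fun w1 _ => Finset.sum_congr rfl fun w2 _ => ?_
          exact step w1 w2
      _ = ∑ w1 : W, (Finset.univ.filter (fun w2 => Hᶜ.Adj w1 w2)).card * d₃ := by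
          refine Finset.sum_congr rfl fun w1 _ => ?_
          rw [← Finset.sum_filter, Finset.sum_const, smul_eq_mul]
      _ = 2 * Hᶜ.edgeFinset.card * d₃ := by
          rw [← Finset.sum_mul]
          congr 1
          convert ordered_pairs_card Hᶜ using 2 <;> congr! <;> rfl
  have hE : (0 : ℝ) < ((2 * H.edgeFinset.card : ℕ) : ℝ) := by
    have : H.edgeFinset.Nonempty := ⟨s(u₀, v₀), by simpa [SimpleGraph.mem_edgeFinset] using huv⟩
    have := Finset.card_pos.mpr this
    positivity
  have hEc : (0 : ℝ) < ((2 * Hᶜ.edgeFinset.card : ℕ) : ℝ) := by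
    have : Hᶜ.edgeFinset.Nonempty := ⟨s(u₁, v₁), by simpa [SimpleGraph.mem_edgeFinset] using huv₁c⟩
    have := Finset.card_pos.mpr this
    positivity
  intro gA gB hA' hB'
  rw [regroup_sum S hA' hB' (P gA gB)]
  by_cases hg1 : gA = gB
  · subst hg1
    -- diagonal input
    have hPdiag : ∀ w1 w2 : W, w1 ≠ w2 → P gA gA w1 w2 = 0 := by
      intro w1 w2 hne
      apply hPperfect
      rintro ⟨c1, -, -⟩
      exact hne (c1.mp rfl)
    by_cases hh1 : hA' = hB'
    · subst hh1
      rw [if_pos ⟨rfl, rfl⟩]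
      have point : ∀ w1 w2 : W,
          ((S.filter (fun e => e w1 = hA' ∧ e w2 = hA')).card : ℝ) * P gA gA w1 w2
            = (d₁ : ℝ) * P gA gA w1 w2 := by
        intro w1 w2
        by_cases hw : w1 = w2
        · subst hw
          congr 1
          have : (S.filter (fun e => e w1 = hA' ∧ e w1 = hA'))
              = S.filter (fun e => e w1 = hA') := by
            apply Finset.filter_congr; intro e _; simp
          rw [this, h1]
        · rw [hPdiag w1 w2 hw, mul_zero, mul_zero]
      have : ∑ w1 : W, ∑ w2 : W,
          ((S.filter (fun e => e w1 = hA' ∧ e w2 = hA')).card : ℝ) * P gA gA w1 w2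
            = (d₁ : ℝ) := by
        calc _ = ∑ w1 : W, ∑ w2 : W, (d₁ : ℝ) * P gA gA w1 w2 :=
              Finset.sum_congr rfl fun w1 _ => Finset.sum_congr rfl fun w2 _ => point w1 w2
          _ = (d₁ : ℝ) * ∑ w1 : W, ∑ w2 : W, P gA gA w1 w2 := by
              rw [Finset.mul_sum]
              exact Finset.sum_congr rfl fun w1 _ => (Finset.mul_sum _ _ _).symm
          _ = (d₁ : ℝ) := by rw [hPsum, mul_one]
      rw [this, cardS1, Nat.cast_mul, mul_inv, mul_assoc,
        inv_mul_cancel₀ (ne_of_gt hd₁'), mul_one]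
    · -- zero case: each term vanishes
      have : ∀ w1 w2 : W,
          ((S.filter (fun e => e w1 = hA' ∧ e w2 = hB')).card : ℝ) * P gA gA w1 w2 = 0 := by
        intro w1 w2
        by_cases hw : w1 = w2
        · subst hw
          have : (S.filter (fun e => e w1 = hA' ∧ e w1 = hB')) = ∅ := by
            rw [Finset.filter_eq_empty_iff]
            rintro e _ ⟨he1, he2⟩
            exact hh1 (he1 ▸ he2 ▸ rfl)
          rw [this]; simp
        · rw [hPdiag w1 w2 hw, mul_zero]
      have hz : ∑ w1 : W, ∑ w2 : W,
          ((S.filter (fun e => e w1 = hA' ∧ e w2 = hB')).card : ℝ) * P gA gA w1 w2 = 0 :=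
        Finset.sum_eq_zero fun w1 _ => Finset.sum_eq_zero fun w2 _ => this w1 w2
      rw [hz, mul_zero, if_neg (fun h => hh1 h.2), if_neg (fun h => G.irrefl h.1),
        if_neg (fun h => h.1 rfl)]
  · by_cases hg2 : G.Adj gA gB
    · -- adjacent input
      have hPadj : ∀ w1 w2 : W, ¬ H.Adj w1 w2 → P gA gB w1 w2 = 0 := by
        intro w1 w2 hna
        apply hPperfect
        rintro ⟨-, c2, -⟩
        exact hna (c2.mp hg2)
      by_cases hh2 : H.Adj hA' hB'
      · rw [if_neg (by tauto), if_pos ⟨hg2, hh2⟩]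
        have point : ∀ w1 w2 : W,
            ((S.filter (fun e => e w1 = hA' ∧ e w2 = hB')).card : ℝ) * P gA gB w1 w2
              = (d₂ : ℝ) * P gA gB w1 w2 := by
          intro w1 w2
          by_cases hadj : H.Adj w1 w2
          · rw [h2 w1 w2 hA' hB' hadj hh2]
          · rw [hPadj w1 w2 hadj, mul_zero, mul_zero]
        have : ∑ w1 : W, ∑ w2 : W,
            ((S.filter (fun e => e w1 = hA' ∧ e w2 = hB')).card : ℝ) * P gA gB w1 w2
              = (d₂ : ℝ) := by
          calc _ = ∑ w1 : W, ∑ w2 : W, (d₂ : ℝ) * P gA gB w1 w2 :=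
                Finset.sum_congr rfl fun w1 _ => Finset.sum_congr rfl fun w2 _ => point w1 w2
            _ = (d₂ : ℝ) * ∑ w1 : W, ∑ w2 : W, P gA gB w1 w2 := by
                rw [Finset.mul_sum]
                exact Finset.sum_congr rfl fun w1 _ => (Finset.mul_sum _ _ _).symm
            _ = (d₂ : ℝ) := by rw [hPsum, mul_one]
        rw [this, cardS2, Nat.cast_mul, mul_inv, mul_assoc,
          inv_mul_cancel₀ (ne_of_gt hd₂'), mul_one]
      · -- output not H-adjacent, input adjacent: zero
        have : ∀ w1 w2 : W,
            ((S.filter (fun e => e w1 = hA' ∧ e w2 = hB')).card : ℝ) * P gA gB w1 w2 = 0 := by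
          intro w1 w2
          by_cases hadj : H.Adj w1 w2
          · have : (S.filter (fun e => e w1 = hA' ∧ e w2 = hB')) = ∅ := by
              rw [Finset.filter_eq_empty_iff]
              rintro e he ⟨he1, he2⟩
              exact hh2 (he1 ▸ he2 ▸ (hS e he w1 w2).mpr hadj)
            rw [this]; simp
          · rw [hPadj w1 w2 hadj, mul_zero]
        have hz : ∑ w1 : W, ∑ w2 : W,
            ((S.filter (fun e => e w1 = hA' ∧ e w2 = hB')).card : ℝ) * P gA gB w1 w2 = 0 :=
          Finset.sum_eq_zero fun w1 _ => Finset.sum_eq_zero fun w2 _ => this w1 w2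
        rw [hz, mul_zero, if_neg (fun h => hg1 h.1), if_neg (fun h => hh2 h.2),
          if_neg (fun h => h.2.1 hg2)]
    · -- distinct non-adjacent input
      have hPnon : ∀ w1 w2 : W, ¬ (w1 ≠ w2 ∧ ¬ H.Adj w1 w2) → P gA gB w1 w2 = 0 := by
        intro w1 w2 hn
        apply hPperfect
        rintro ⟨-, -, c3⟩
        exact hn (c3.mp ⟨hg1, hg2⟩)
      by_cases hcomp : hA' ≠ hB' ∧ ¬ H.Adj hA' hB'
      · have hcompc : Hᶜ.Adj hA' hB' := by
          rw [SimpleGraph.compl_adj]; exact hcomp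
        rw [if_neg (fun h => hg1 h.1), if_neg (fun h => hg2 h.1),
          if_pos ⟨hg1, hg2, hcomp.1, hcomp.2⟩]
        have point : ∀ w1 w2 : W,
            ((S.filter (fun e => e w1 = hA' ∧ e w2 = hB')).card : ℝ) * P gA gB w1 w2
              = (d₃ : ℝ) * P gA gB w1 w2 := by
          intro w1 w2
          by_cases hadj : w1 ≠ w2 ∧ ¬ H.Adj w1 w2
          · have : Hᶜ.Adj w1 w2 := by rw [SimpleGraph.compl_adj]; exact hadj
            rw [h3 w1 w2 hA' hB' this hcompc]
          · rw [hPnon w1 w2 hadj, mul_zero, mul_zero]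
        have : ∑ w1 : W, ∑ w2 : W,
            ((S.filter (fun e => e w1 = hA' ∧ e w2 = hB')).card : ℝ) * P gA gB w1 w2
              = (d₃ : ℝ) := by
          calc _ = ∑ w1 : W, ∑ w2 : W, (d₃ : ℝ) * P gA gB w1 w2 :=
                Finset.sum_congr rfl fun w1 _ => Finset.sum_congr rfl fun w2 _ => point w1 w2
            _ = (d₃ : ℝ) * ∑ w1 : W, ∑ w2 : W, P gA gB w1 w2 := by
                rw [Finset.mul_sum]
                exact Finset.sum_congr rfl fun w1 _ => (Finset.mul_sum _ _ _).symm
            _ = (d₃ : ℝ) := by rw [hPsum, mul_one]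
        rw [this, cardS3, Nat.cast_mul, mul_inv, mul_assoc,
          inv_mul_cancel₀ (ne_of_gt hd₃'), mul_one]
      · -- mismatched: zero
        have : ∀ w1 w2 : W,
            ((S.filter (fun e => e w1 = hA' ∧ e w2 = hB')).card : ℝ) * P gA gB w1 w2 = 0 := by
          intro w1 w2
          by_cases hadj : w1 ≠ w2 ∧ ¬ H.Adj w1 w2
          · have hc : Hᶜ.Adj w1 w2 := by rw [SimpleGraph.compl_adj]; exact hadj
            have : (S.filter (fun e => e w1 = hA' ∧ e w2 = hB')) = ∅ := by
              rw [Finset.filter_eq_empty_iff]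
              rintro e he ⟨he1, he2⟩
              have := (hSc e he w1 w2).mpr hc
              rw [he1, he2, SimpleGraph.compl_adj] at this
              exact hcomp this
            rw [this]; simp
          · rw [hPnon w1 w2 hadj, mul_zero]
        have hz : ∑ w1 : W, ∑ w2 : W,
            ((S.filter (fun e => e w1 = hA' ∧ e w2 = hB')).card : ℝ) * P gA gB w1 w2 = 0 :=
          Finset.sum_eq_zero fun w1 _ => Finset.sum_eq_zero fun w2 _ => this w1 w2
        rw [hz, mul_zero, if_neg (fun h => hg1 h.1), if_neg (fun h => hg2 h.1),
          if_neg (fun h => hcomp ⟨h.2.2.1, h.2.2.2⟩)]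
end
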